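/- Let A ∈ ℝ^{3×3} have rows (-2, 0, 2), (1, -3, 2), (1, 3, -4), let B = (1/3)·[[4,-4,0],[-4,6,-2],[0,-2,2]] and K = [[3, 3/2, -3/2],[3/2, 9/4, -3/4],[-3/2, -3/4, 21/4]]. Then K is symmetric positive definite, B is symmetric, and A x = -K B x for all x ∈ ℝ³ (i.e. A = -KB), exhibiting A as the flow of the canonical gradient system with F(x) = ½ xᵀBx. -/

import Mathlib

open Matrix

theorem nonreversible_markov_canonical_gradient_system
    (A B K : Matrix (Fin 3) (Fin 3) ℝ)
    (hA : A = !![-2, 0, 2; 1, -3, 2; 1, 3, -4])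
    (hB : B = (1 / 3 : ℝ) • !![4, -4, 0; -4, 6, -2; 0, -2, 2])
    (hK : K = !![3, 3/2, -3/2; 3/2, 9/4, -3/4; -3/2, -3/4, 21/4]) :
    K.PosDef ∧ K.IsSymm ∧ B.IsSymm ∧ ∀ x : Fin 3 → ℝ, A.mulVec x = -(K * B).mulVec x := by
  subst hA hB hK
  have hKsymm : (!![3, 3/2, -3/2; 3/2, 9/4, -3/4; -3/2, -3/4, 21/4] : Matrix (Fin 3) (Fin 3) ℝ).IsSymm := by
    rw [Matrix.IsSymm]; ext i j; fin_cases i <;> fin_cases j <;> simp [Matrix.transpose_apply]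
  have hKherm : (!![3, 3/2, -3/2; 3/2, 9/4, -3/4; -3/2, -3/4, 21/4] : Matrix (Fin 3) (Fin 3) ℝ).IsHermitian := by
    rw [Matrix.IsHermitian]; ext i j; fin_cases i <;> fin_cases j <;> simp [Matrix.conjTranspose_apply]
  refine ⟨⟨hKherm, ?_⟩, hKsymm, ?_, ?_⟩
  · intro x hx
    have hx' : x 0 ≠ 0 ∨ x 1 ≠ 0 ∨ x 2 ≠ 0 := by
      by_contra h
      push_neg at h
      apply hx
      ext i; fin_cases i <;> simp [h.1, h.2.1, h.2.2]
    simp [Matrix.mulVec, dotProduct, Fin.sum_univ_three, Finsupp.sum_fintype]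
    rcases hx' with h | h | h <;>
      nlinarith [sq_nonneg (x 0), sq_nonneg (x 1), sq_nonneg (x 2), sq_nonneg (x 0 + x 1),
        sq_nonneg (x 0 - x 2), sq_nonneg (x 1 - x 2), sq_nonneg (2*x 0 + x 1 - x 2),
        sq_nonneg (x 1 + x 2), sq_nonneg (x 0 + x 1 - x 2), mul_self_pos.mpr h]
  · rw [Matrix.IsSymm, Matrix.transpose_smul]
    congr 1
    ext i j; fin_cases i <;> fin_cases j <;> simp [Matrix.transpose_apply]
  · intro x
    ext i
    fin_cases i <;>
      simp [Matrix.mulVec, dotProduct, Fin.sum_univ_three, Matrix.mul_apply] <;> ring
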